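/- Suppose in addition that h_{ij} = h δ_{ij} for a constant h > 0 and that Dh_{α,ij} = 0 for all α, i, j. Then the unique solution (Γ, F, D, E, B, H) of the torsion-free symmetry conditions and the six metric-compatibility equations is given by: F^μ_{βi} = (1/2) g̃^{αμ} ( DA_{α,iβ} − DA_{β,iα} − (1/h) A_{jα} A_{kβ} ε_{ijk} ); Γ^σ_{μν} = Γ̃^σ_{μν} − (1/h)( A_{μi} F^σ_{νi} + A_{νi} F^σ_{μi} ); D^μ_{ij} = 0; E^k_{αβ} = −(1/(2h)) ( DA_{α,kβ} + DA_{β,kα} − 2 A_{kμ} Γ^μ_{αβ} ); B^k_{αi} = −(1/h) A_{kμ} F^μ_{αi} − (1/(2h)) A_{jα} ε_{kij}; H^i_{jk} = −(1/2) ε_{ijk}. -/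

import Mathlib

noncomputable section

/-- The totally antisymmetric Levi-Civita symbol on three indices with ε₀₁₂ = 1
(indices written 1,2,3 in the paper). -/
def eps (i j k : Fin 3) : ℝ :=
  ((((i : ℤ) - (j : ℤ)) * ((j : ℤ) - (k : ℤ)) * ((k : ℤ) - (i : ℤ))) / 2 : ℤ)


lemma eps_cyc (i j k : Fin 3) : eps k i j = eps i j k := by
  fin_cases i <;> fin_cases j <;> fin_cases k <;> norm_num [eps]
lemma eps_swap12 (i j k : Fin 3) : eps j i k = - eps i j k := by
  fin_cases i <;> fin_cases j <;> fin_cases k <;> norm_num [eps]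
lemma eps_swap13 (i j k : Fin 3) : eps k j i = - eps i j k := by
  fin_cases i <;> fin_cases j <;> fin_cases k <;> norm_num [eps]
lemma eps_swap23 (i j k : Fin 3) : eps i k j = - eps i j k := by
  fin_cases i <;> fin_cases j <;> fin_cases k <;> norm_num [eps]

/-- In the constant round case `h_{ij} = h δ_{ij}`, `Dh = 0`, the unique solution
`(Γ, F, D, E, B, H)` of the torsion-free symmetry conditions and the six
metric-compatibility equations is given by the stated simplified formulas. -/
theorem stmt2 (n : ℕ) (hn : 1 ≤ n)
    (g ginv : Fin n → Fin n → ℝ)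
    (h hinv : Fin 3 → Fin 3 → ℝ)
    (A : Fin 3 → Fin n → ℝ)
    (Dg : Fin n → Fin n → Fin n → ℝ)
    (Dh : Fin n → Fin 3 → Fin 3 → ℝ)
    (DA : Fin n → Fin 3 → Fin n → ℝ)
    (hg_symm : ∀ μ ν, g μ ν = g ν μ)
    (hh_symm : ∀ i j, h i j = h j i)
    (hg_inv : ∀ μ ν, ∑ ρ, g μ ρ * ginv ρ ν = if μ = ν then 1 else 0)
    (hg_inv' : ∀ μ ν, ∑ ρ, ginv μ ρ * g ρ ν = if μ = ν then 1 else 0)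
    (hh_inv : ∀ i j, ∑ k, h i k * hinv k j = if i = j then 1 else 0)
    (hh_inv' : ∀ i j, ∑ k, hinv i k * h k j = if i = j then 1 else 0)
    (hDg_symm : ∀ α β γ, Dg α β γ = Dg α γ β)
    (hDh_symm : ∀ α i j, Dh α i j = Dh α j i)
    -- the constant round fuzzy sphere metric
    (h0 : ℝ) (hh0 : 0 < h0)
    (hround : ∀ i j, h i j = if i = j then h0 else 0)
    (hDh0 : ∀ α i j, Dh α i j = 0)
    -- the effective metric g̃ and its inverse
    (gt gtinv : Fin n → Fin n → ℝ)
    (hgt : ∀ μ ν, gt μ ν = g μ ν - ∑ i, ∑ j, hinv i j * A i μ * A j ν)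
    (hgt_inv : ∀ μ ν, ∑ ρ, gt μ ρ * gtinv ρ ν = if μ = ν then 1 else 0)
    (hgt_inv' : ∀ μ ν, ∑ ρ, gtinv μ ρ * gt ρ ν = if μ = ν then 1 else 0)
    -- Dg̃ and Γ̃
    (Dgt : Fin n → Fin n → Fin n → ℝ)
    (hDgt : ∀ α μ ν, Dgt α μ ν = Dg α μ ν
        + (∑ i, ∑ j, ∑ k, ∑ l, hinv i k * hinv j l * Dh α k l * A i μ * A j ν)
        - ∑ i, ∑ j, hinv i j * (DA α i μ * A j ν + A i μ * DA α j ν))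
    (Γt : Fin n → Fin n → Fin n → ℝ)
    (hΓt : ∀ σ μ ν, Γt σ μ ν = (1/2) * ∑ ρ, gtinv σ ρ * (Dgt μ ν ρ + Dgt ν μ ρ - Dgt ρ μ ν))
    -- the unknown connection coefficients
    (Γ : Fin n → Fin n → Fin n → ℝ)
    (F : Fin n → Fin n → Fin 3 → ℝ)
    (D : Fin n → Fin 3 → Fin 3 → ℝ)
    (E : Fin 3 → Fin n → Fin n → ℝ)
    (B : Fin 3 → Fin n → Fin 3 → ℝ)
    (H : Fin 3 → Fin 3 → Fin 3 → ℝ)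
    -- torsion-free symmetry conditions
    (hΓ_symm : ∀ μ α β, Γ μ α β = Γ μ β α)
    (hD_symm : ∀ μ i j, D μ i j = D μ j i)
    (hE_symm : ∀ i α β, E i α β = E i β α)
    (hH_tor : ∀ i j k, H i j k - H i k j + eps i j k = 0)
    -- the six metric-compatibility equations
    (heq1 : ∀ α β γ, Dg α β γ - (∑ μ, g μ γ * Γ μ α β) - (∑ μ, g β μ * Γ μ α γ)
        + (∑ i, A i γ * E i α β) + (∑ i, A i β * E i α γ) = 0)
    (heq2 : ∀ α i β, DA α i β - (∑ μ, A i μ * Γ μ α β) + (∑ μ, g β μ * F μ α i)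
        + (∑ k, A k β * B k α i) + (∑ k, h k i * E k α β) = 0)
    (heq3 : ∀ α β i, (∑ μ, g μ β * F μ α i) + (∑ μ, g α μ * F μ β i)
        + (∑ k, A k β * B k α i) + (∑ k, A k α * B k β i) = 0)
    (heq4 : ∀ α i j, Dh α i j + (∑ μ, A i μ * F μ α j) + (∑ μ, A j μ * F μ α i)
        + (∑ k, h k j * B k α i) + (∑ k, h i k * B k α j) = 0)
    (heq5 : ∀ α i j, (∑ μ, g μ α * D μ i j) + (∑ μ, A j μ * F μ α i)
        + (∑ k, A k α * H k i j) + (∑ k, h j k * B k α i) = 0)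
    (heq6 : ∀ i j k, (∑ μ, A j μ * D μ i k) + (∑ μ, A k μ * D μ i j)
        + (∑ l, h l k * H l i j) + (∑ l, h l j * H l i k) = 0) :
    -- the unique simplified solution
    (∀ μ' β i, F μ' β i = (1/2) * ∑ α, gtinv α μ' *
        (DA α i β - DA β i α - (1/h0) * ∑ j, ∑ k, A j α * A k β * eps i j k)) ∧
    (∀ σ μ ν, Γ σ μ ν = Γt σ μ ν - (1/h0) * ∑ i, (A i μ * F σ ν i + A i ν * F σ μ i)) ∧
    (∀ μ i j, D μ i j = 0) ∧
    (∀ k α β, E k α β = -(1/(2*h0)) *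
        (DA α k β + DA β k α - 2 * ∑ μ, A k μ * Γ μ α β)) ∧
    (∀ k α i, B k α i = -(1/h0) * (∑ μ, A k μ * F μ α i)
        - (1/(2*h0)) * ∑ j, A j α * eps k i j) ∧
    (∀ i j k, H i j k = -(1/2) * eps i j k) := by
  have hne : h0 ≠ 0 := ne_of_gt hh0
  have hinv_eq : ∀ i j, hinv i j = if i = j then 1/h0 else 0 := by
    intro i j
    have h2 := hh_inv' i j
    simp only [hround, mul_ite, mul_zero, Finset.sum_ite_eq', Finset.mem_univ, if_true] at h2
    by_cases hij : i = j
    · simp only [hij, if_true] at h2 ⊢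
      exact (eq_div_iff hne).mpr h2
    · simp only [hij, if_false] at h2 ⊢
      exact (mul_eq_zero.mp h2).resolve_right hne
  have hgt3 : ∀ μ ν, gt μ ν = g μ ν - (1/h0) * ∑ i, A i μ * A i ν := by
    intro μ ν
    rw [hgt]
    congr 1
    rw [Finset.mul_sum]
    refine Finset.sum_congr rfl fun i _ => ?_
    refine (Finset.sum_eq_single i (fun j _ hj => by simp [hinv_eq, (Ne.symm hj : ¬ i = j)]) (by simp)).trans ?_
    simp [hinv_eq]; ring
  have gt_symm : ∀ μ ν, gt μ ν = gt ν μ := by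
    intro μ ν
    rw [hgt3, hgt3, hg_symm μ ν]
    congr 2
    exact Finset.sum_congr rfl fun i _ => by ring
  have key : ∀ (X : Fin n → ℝ) (ν : Fin n), X ν = ∑ γ, gtinv ν γ * ∑ μ, gt γ μ * X μ := by
    intro X ν
    calc X ν = ∑ μ, (if ν = μ then 1 else 0) * X μ := by simp
    _ = ∑ μ, (∑ γ, gtinv ν γ * gt γ μ) * X μ :=
        Finset.sum_congr rfl fun μ _ => by rw [hgt_inv']
    _ = ∑ μ, ∑ γ, gtinv ν γ * (gt γ μ * X μ) := Finset.sum_congr rfl fun μ _ => by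
        rw [Finset.sum_mul]; exact Finset.sum_congr rfl fun γ _ => by ring
    _ = ∑ γ, ∑ μ, gtinv ν γ * (gt γ μ * X μ) := Finset.sum_comm
    _ = ∑ γ, gtinv ν γ * ∑ μ, gt γ μ * X μ :=
        Finset.sum_congr rfl fun γ _ => (Finset.mul_sum _ _ _).symm
  have gtinv_symm : ∀ μ ν, gtinv μ ν = gtinv ν μ := by
    intro μ ν
    symm
    calc gtinv ν μ = ∑ ρ, (if μ = ρ then 1 else 0) * gtinv ν ρ := by simp
    _ = ∑ ρ, (∑ σ, gtinv μ σ * gt σ ρ) * gtinv ν ρ :=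
        Finset.sum_congr rfl fun ρ _ => by rw [hgt_inv']
    _ = ∑ ρ, ∑ σ, gtinv μ σ * (gt σ ρ * gtinv ν ρ) := Finset.sum_congr rfl fun ρ _ => by
        rw [Finset.sum_mul]; exact Finset.sum_congr rfl fun σ _ => by ring
    _ = ∑ σ, ∑ ρ, gtinv μ σ * (gt σ ρ * gtinv ν ρ) := Finset.sum_comm
    _ = ∑ σ, gtinv μ σ * ∑ ρ, gtinv ν ρ * gt ρ σ := Finset.sum_congr rfl fun σ _ => by
        rw [← Finset.mul_sum]; congr 1; exact Finset.sum_congr rfl fun ρ _ => by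
          rw [gt_symm]; ring
    _ = ∑ σ, gtinv μ σ * (if ν = σ then 1 else 0) :=
        Finset.sum_congr rfl fun σ _ => by rw [hgt_inv']
    _ = gtinv μ ν := by simp
  have expand_gt : ∀ (α : Fin n) (X : Fin n → ℝ), ∑ μ, gt α μ * X μ =
      ∑ μ, g α μ * X μ - (1/h0) * ∑ k, A k α * ∑ μ, A k μ * X μ := by
    intro α X
    have step : ∀ μ, gt α μ * X μ = g α μ * X μ - (1/h0) * ∑ k, A k α * (A k μ * X μ) := by
      intro μ
      rw [hgt3]
      rw [show (∑ k, A k α * (A k μ * X μ)) = (∑ i, A i α * A i μ) * X μ by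
        rw [Finset.sum_mul]; exact Finset.sum_congr rfl fun k _ => by ring]
      ring
    calc ∑ μ, gt α μ * X μ = ∑ μ, (g α μ * X μ - (1/h0) * ∑ k, A k α * (A k μ * X μ)) :=
        Finset.sum_congr rfl fun μ _ => step μ
    _ = ∑ μ, g α μ * X μ - (1/h0) * ∑ μ, ∑ k, A k α * (A k μ * X μ) := by
        rw [Finset.sum_sub_distrib, ← Finset.mul_sum]
    _ = ∑ μ, g α μ * X μ - (1/h0) * ∑ k, A k α * ∑ μ, A k μ * X μ := by
        congr 1
        rw [Finset.sum_comm]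
        congr 1
        exact Finset.sum_congr rfl fun k _ => (Finset.mul_sum _ _ _).symm

  have hc : h0 * (1/h0) = 1 := by field_simp
  have heq6' : ∀ i j k, (∑ μ, A j μ * D μ i k) + (∑ μ, A k μ * D μ i j)
      + h0 * H k i j + h0 * H j i k = 0 := by
    intro i j k
    have e := heq6 i j k
    simp only [hround, ite_mul, zero_mul, Finset.sum_ite_eq', Finset.mem_univ, if_true] at e
    linear_combination e
  have ADsym : ∀ (a i j : Fin 3), (∑ μ, A a μ * D μ i j) = ∑ μ, A a μ * D μ j i :=
    fun a i j => Finset.sum_congr rfl fun μ _ => by rw [hD_symm]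
  have Hstar' : ∀ i j k, h0 * H k i j = -(∑ μ, A k μ * D μ i j) - (h0/2) * eps k i j := by
    intro i j k
    have e1 := heq6' i j k
    have e2 := heq6' j k i
    have e3 := heq6' k i j
    have s1 := ADsym j i k
    have s2 := ADsym i j k
    have t1 := hH_tor k i j
    have t2 := hH_tor j i k
    have t3 := hH_tor i j k
    have s3 := ADsym k i j
    have w1 := eps_swap12 i j k
    linear_combination (1/2)*e1 + (1/2)*e2 - (1/2)*e3 - (1/2)*s1 - (1/2)*s2 + (1/2)*s3
      + (h0/2)*t1 - (h0/2)*t2 - (h0/2)*t3 + (h0/2)*w1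
  have Hstar : ∀ i j k, H k i j = -(1/h0) * (∑ μ, A k μ * D μ i j) - (1/2) * eps k i j := by
    intro i j k
    have e := Hstar' i j k
    linear_combination (1/h0) * e - (H k i j + (1/2) * eps k i j) * hc
  have heq4' : ∀ α i j, (∑ μ, A i μ * F μ α j) + (∑ μ, A j μ * F μ α i)
      + h0 * B j α i + h0 * B i α j = 0 := by
    intro α i j
    have e := heq4 α i j
    simp only [hDh0, hround, ite_mul, zero_mul, Finset.sum_ite_eq, Finset.sum_ite_eq',
      Finset.mem_univ, if_true, zero_add] at e
    linear_combination e
  have AHsub : ∀ (α : Fin n) (i j : Fin 3), (∑ k, A k α * H k i j) =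
      -(1/h0) * (∑ k, A k α * ∑ μ, A k μ * D μ i j) - (1/2) * ∑ k, A k α * eps k i j := by
    intro α i j
    calc ∑ k, A k α * H k i j
        = ∑ k, (-(1/h0) * (A k α * ∑ μ, A k μ * D μ i j) - (1/2) * (A k α * eps k i j)) :=
          Finset.sum_congr rfl fun k _ => by rw [Hstar]; ring
    _ = _ := by rw [Finset.sum_sub_distrib, ← Finset.mul_sum, ← Finset.mul_sum]
  have hgsumD : ∀ (α : Fin n) (i j : Fin 3), ∑ μ, g μ α * D μ i j = ∑ μ, g α μ * D μ i j :=
    fun α i j => Finset.sum_congr rfl fun μ _ => by rw [hg_symm]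
  have heq5'' : ∀ α i j, (∑ μ, gt α μ * D μ i j) + (∑ μ, A j μ * F μ α i)
      - (1/2) * (∑ k, A k α * eps k i j) + h0 * B j α i = 0 := by
    intro α i j
    have e := heq5 α i j
    simp only [hround, ite_mul, zero_mul, Finset.sum_ite_eq, Finset.sum_ite_eq',
      Finset.mem_univ, if_true] at e
    have a1 := AHsub α i j
    have a2 := expand_gt α (fun μ => D μ i j)
    have a3 := hgsumD α i j
    linear_combination e + a2 - a1 - a3
  have GDsym : ∀ (α : Fin n) (i j : Fin 3), (∑ μ, gt α μ * D μ j i) = ∑ μ, gt α μ * D μ i j :=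
    fun α i j => Finset.sum_congr rfl fun μ _ => by rw [hD_symm]
  have GD0 : ∀ (α : Fin n) (i j : Fin 3), (∑ μ, gt α μ * D μ i j) = 0 := by
    intro α i j
    have e1 := heq5'' α i j
    have e2 := heq5'' α j i
    have e4 := heq4' α i j
    have s := GDsym α i j
    have es : (∑ k, A k α * eps k j i) = - ∑ k, A k α * eps k i j := by
      rw [← Finset.sum_neg_distrib]
      exact Finset.sum_congr rfl fun k _ => by rw [eps_swap23 k i j]; ring
    linear_combination (1/2)*e1 + (1/2)*e2 - (1/2)*e4 - (1/2)*s + (1/4)*es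
  have hD0 : ∀ (μ : Fin n) (i j : Fin 3), D μ i j = 0 := by
    intro ν i j
    have k := key (fun μ => D μ i j) ν
    simpa [GD0] using k
  have hH : ∀ i j k, H i j k = -(1/2) * eps i j k := by
    intro i j k
    have e := Hstar j k i
    simpa [hD0] using e
  have hB : ∀ k α i, B k α i = -(1/h0) * (∑ μ, A k μ * F μ α i)
      - (1/(2*h0)) * ∑ j, A j α * eps k i j := by
    intro k α i
    have e := heq5'' α i k
    have g0 := GD0 α i k
    have es : (∑ l, A l α * eps l i k) = - ∑ j, A j α * eps k i j := by
      rw [← Finset.sum_neg_distrib]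
      exact Finset.sum_congr rfl fun l _ => by rw [eps_swap13 k i l]; ring
    linear_combination (1/h0)*e - (1/h0)*g0 + (1/(2*h0))*es - (B k α i)*hc

  have hepsAA : ∀ (α β : Fin n) (i : Fin 3), (∑ k, ∑ j, A k β * A j α * eps k i j)
      + (∑ k, ∑ j, A k α * A j β * eps k i j) = 0 := by
    intro α β i
    have e : (∑ k, ∑ j, A k α * A j β * eps k i j)
        = - (∑ k, ∑ j, A k β * A j α * eps k i j) := by
      rw [Finset.sum_comm, ← Finset.sum_neg_distrib]
      refine Finset.sum_congr rfl fun k _ => ?_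
      rw [← Finset.sum_neg_distrib]
      refine Finset.sum_congr rfl fun j _ => ?_
      rw [eps_swap13 k i j]; ring
    linear_combination e
  have hAB : ∀ (β α : Fin n) (i : Fin 3), (∑ k, A k β * B k α i) =
      -(1/h0) * (∑ k, A k β * ∑ μ, A k μ * F μ α i)
      - (1/(2*h0)) * ∑ k, ∑ j, A k β * A j α * eps k i j := by
    intro β α i
    have hmul : ∀ k, A k β * ∑ j, A j α * eps k i j = ∑ j, A k β * A j α * eps k i j :=
      fun k => by rw [Finset.mul_sum]; exact Finset.sum_congr rfl fun j _ => by ring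
    calc ∑ k, A k β * B k α i
        = ∑ k, (-(1/h0) * (A k β * ∑ μ, A k μ * F μ α i)
            - (1/(2*h0)) * ∑ j, A k β * A j α * eps k i j) :=
          Finset.sum_congr rfl fun k _ => by rw [hB, ← hmul k]; ring
    _ = _ := by rw [Finset.sum_sub_distrib, ← Finset.mul_sum, ← Finset.mul_sum]
  have hgF : ∀ (β α : Fin n) (i : Fin 3), (∑ μ, g μ β * F μ α i) =
      (∑ μ, gt β μ * F μ α i) + (1/h0) * ∑ k, A k β * ∑ μ, A k μ * F μ α i := by
    intro β α i
    have e := expand_gt β (fun μ => F μ α i)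
    have s : ∑ μ, g μ β * F μ α i = ∑ μ, g β μ * F μ α i :=
      Finset.sum_congr rfl fun μ _ => by rw [hg_symm]
    linear_combination s - e
  have heq3' : ∀ (α β : Fin n) (i : Fin 3),
      (∑ μ, gt β μ * F μ α i) + (∑ μ, gt α μ * F μ β i) = 0 := by
    intro α β i
    have e := heq3 α β i
    have a1 := hgF β α i
    have a2 := expand_gt α (fun μ => F μ β i)
    have b1 := hAB β α i
    have b2 := hAB α β i
    have c1 := hepsAA α β i
    linear_combination e - a1 + a2 - b1 - b2 + (1/(2*h0)) * c1
  have heq2' : ∀ (α : Fin n) (i : Fin 3) (β : Fin n), DA α i β - (∑ μ, A i μ * Γ μ α β)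
      + (∑ μ, gt β μ * F μ α i) - (1/(2*h0)) * (∑ k, ∑ j, A k β * A j α * eps k i j)
      + h0 * E i α β = 0 := by
    intro α i β
    have e := heq2 α i β
    simp only [hround, ite_mul, zero_mul, Finset.sum_ite_eq, Finset.sum_ite_eq',
      Finset.mem_univ, if_true] at e
    have a1 := expand_gt β (fun μ => F μ α i)
    have b1 := hAB β α i
    linear_combination e + a1 - b1
  have relabel1 : ∀ (α β : Fin n) (i : Fin 3), (∑ k, ∑ j, A k β * A j α * eps k i j)
      = ∑ j, ∑ k, A j α * A k β * eps i j k := by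
    intro α β i
    rw [Finset.sum_comm]
    refine Finset.sum_congr rfl fun j _ => Finset.sum_congr rfl fun k _ => ?_
    rw [eps_cyc i j k]; ring
  have FK : ∀ (α β : Fin n) (i : Fin 3), (∑ μ, gt α μ * F μ β i) =
      (1/2) * (DA α i β - DA β i α - (1/h0) * ∑ j, ∑ k, A j α * A k β * eps i j k) := by
    intro α β i
    have e1 := heq2' α i β
    have e2 := heq2' β i α
    have s1 : (∑ μ, A i μ * Γ μ α β) = ∑ μ, A i μ * Γ μ β α :=
      Finset.sum_congr rfl fun μ _ => by rw [hΓ_symm]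
    have sE := hE_symm i α β
    have s3 := heq3' α β i
    have r1 := relabel1 α β i
    have c1 := hepsAA α β i
    linear_combination (-(1/2))*e1 + (1/2)*e2 - (1/2)*s1 + (h0/2)*sE + (1/2)*s3
      - (1/(2*h0))*r1 + (1/(4*h0))*c1
  have hF : ∀ (μ' β : Fin n) (i : Fin 3), F μ' β i = (1/2) * ∑ α, gtinv α μ' *
      (DA α i β - DA β i α - (1/h0) * ∑ j, ∑ k, A j α * A k β * eps i j k) := by
    intro μ' β i
    have k0 := key (fun μ => F μ β i) μ'
    rw [k0, Finset.mul_sum]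
    refine Finset.sum_congr rfl fun α _ => ?_
    rw [FK α β i, gtinv_symm μ' α]
    ring
  have hE : ∀ (k : Fin 3) (α β : Fin n), E k α β = -(1/(2*h0)) *
      (DA α k β + DA β k α - 2 * ∑ μ, A k μ * Γ μ α β) := by
    intro i α β
    have e1 := heq2' α i β
    have e2 := heq2' β i α
    have s1 : (∑ μ, A i μ * Γ μ β α) = ∑ μ, A i μ * Γ μ α β :=
      Finset.sum_congr rfl fun μ _ => by rw [hΓ_symm]
    have sE := hE_symm i α β
    have s3 := heq3' α β i
    have c1 := hepsAA α β i
    linear_combination (1/(2*h0))*e1 + (1/(2*h0))*e2 + (1/(2*h0))*s1 + (h0/(2*h0))*sE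
      - (1/(2*h0))*s3 + (1/(4*h0^2))*c1 - (E i α β)*hc

  have hAE : ∀ (γ α β : Fin n), (∑ i, A i γ * E i α β) =
      -(1/(2*h0)) * (∑ i, A i γ * DA α i β) - (1/(2*h0)) * (∑ i, A i γ * DA β i α)
      + (1/h0) * ∑ i, A i γ * ∑ μ, A i μ * Γ μ α β := by
    intro γ α β
    calc ∑ i, A i γ * E i α β
        = ∑ i, (-(1/(2*h0)) * (A i γ * DA α i β) + (-(1/(2*h0)) * (A i γ * DA β i α))
            + (1/h0) * (A i γ * ∑ μ, A i μ * Γ μ α β)) :=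
          Finset.sum_congr rfl fun i _ => by rw [hE]; ring
    _ = _ := by
        simp only [Finset.sum_add_distrib, ← Finset.mul_sum]
        ring
  have heq1' : ∀ (α β γ : Fin n), (∑ μ, gt γ μ * Γ μ α β) + (∑ μ, gt β μ * Γ μ α γ) =
      Dg α β γ - (1/(2*h0)) * ((∑ i, A i γ * DA α i β) + (∑ i, A i γ * DA β i α)
        + (∑ i, A i β * DA α i γ) + (∑ i, A i β * DA γ i α)) := by
    intro α β γ
    have e := heq1 α β γ
    have a1 := hAE γ α β
    have a2 := hAE β α γ
    have g1 := expand_gt γ (fun μ => Γ μ α β)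
    have g2 := expand_gt β (fun μ => Γ μ α γ)
    have s1 : (∑ μ, g μ γ * Γ μ α β) = ∑ μ, g γ μ * Γ μ α β :=
      Finset.sum_congr rfl fun μ _ => by rw [hg_symm]
    linear_combination g1 + g2 - e + a1 + a2 - s1
  have GK : ∀ (α β γ : Fin n), 2 * (∑ μ, gt γ μ * Γ μ α β) =
      (Dg α β γ + Dg β α γ - Dg γ α β)
      - (1/h0) * ((∑ i, A i γ * DA α i β) + (∑ i, A i γ * DA β i α)) := by
    intro α β γ
    have e1 := heq1' α β γ
    have e2 := heq1' β α γ
    have e3 := heq1' γ α β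
    have s1 : (∑ μ, gt γ μ * Γ μ β α) = ∑ μ, gt γ μ * Γ μ α β :=
      Finset.sum_congr rfl fun μ _ => by rw [hΓ_symm]
    have s2 : (∑ μ, gt β μ * Γ μ γ α) = ∑ μ, gt β μ * Γ μ α γ :=
      Finset.sum_congr rfl fun μ _ => by rw [hΓ_symm]
    have s3 : (∑ μ, gt α μ * Γ μ γ β) = ∑ μ, gt α μ * Γ μ β γ :=
      Finset.sum_congr rfl fun μ _ => by rw [hΓ_symm]
    linear_combination e1 + e2 - e3 - s1 + s2 + s3
  have hDgt' : ∀ (a b c : Fin n), Dgt a b c = Dg a b c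
      - (1/h0) * ((∑ i, A i c * DA a i b) + (∑ i, A i b * DA a i c)) := by
    intro a b c
    rw [hDgt]
    simp only [hDh0, mul_zero, zero_mul, Finset.sum_const_zero, add_zero]
    congr 1
    calc ∑ i, ∑ j, hinv i j * (DA a i b * A j c + A i b * DA a j c)
        = ∑ i, (1/h0) * (DA a i b * A i c + A i b * DA a i c) :=
          Finset.sum_congr rfl fun i _ =>
            (Finset.sum_eq_single i (fun j _ hj => by simp [hinv_eq, (Ne.symm hj : ¬ i = j)])
              (by simp)).trans (by simp [hinv_eq])
    _ = (1/h0) * ((∑ i, A i c * DA a i b) + (∑ i, A i b * DA a i c)) := by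
        rw [← Finset.mul_sum]
        congr 1
        rw [← Finset.sum_add_distrib]
        exact Finset.sum_congr rfl fun i _ => by ring
  have lastΓ : ∀ (σ μ ν : Fin n), Γ σ μ ν = Γt σ μ ν
      - (1/h0) * ∑ i, (A i μ * F σ ν i + A i ν * F σ μ i) := by
    intro σ α β
    have fsplit : ∀ γ : Fin n, (∑ i, (A i α * (∑ μ, gt γ μ * F μ β i)
        + A i β * (∑ μ, gt γ μ * F μ α i)))
        = (1/2) * (∑ i, A i α * DA γ i β) - (1/2) * (∑ i, A i α * DA β i γ)
        - (1/(2*h0)) * (∑ i, A i α * ∑ j, ∑ k, A j γ * A k β * eps i j k)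
        + (1/2) * (∑ i, A i β * DA γ i α) - (1/2) * (∑ i, A i β * DA α i γ)
        - (1/(2*h0)) * (∑ i, A i β * ∑ j, ∑ k, A j γ * A k α * eps i j k) := by
      intro γ
      calc _ = ∑ i : Fin 3, ((1/2) * (A i α * DA γ i β) - (1/2) * (A i α * DA β i γ)
          - (1/(2*h0)) * (A i α * ∑ j, ∑ k, A j γ * A k β * eps i j k)
          + (1/2) * (A i β * DA γ i α) - (1/2) * (A i β * DA α i γ)
          - (1/(2*h0)) * (A i β * ∑ j, ∑ k, A j γ * A k α * eps i j k)) :=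
            Finset.sum_congr rfl fun i _ => by rw [FK γ β i, FK γ α i]; ring
      _ = _ := by
          simp only [Finset.sum_add_distrib, Finset.sum_sub_distrib, ← Finset.mul_sum]
    have epsP : ∀ γ : Fin n, (∑ i, A i α * ∑ j, ∑ k, A j γ * A k β * eps i j k)
        + (∑ i, A i β * ∑ j, ∑ k, A j γ * A k α * eps i j k) = 0 := by
      intro γ
      have push : ∀ (u w : Fin n), (∑ i, A i u * ∑ j, ∑ k, A j γ * A k w * eps i j k)
          = ∑ i, ∑ j, ∑ k, A i u * (A j γ * A k w * eps i j k) :=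
        fun u w => Finset.sum_congr rfl fun i _ => by
          rw [Finset.mul_sum]
          exact Finset.sum_congr rfl fun j _ => Finset.mul_sum _ _ _
      rw [push, push]
      have swap : (∑ i, ∑ j, ∑ k, A i β * (A j γ * A k α * eps i j k))
          = ∑ k, ∑ j, ∑ i, A i β * (A j γ * A k α * eps i j k) := by
        calc (∑ i, ∑ j, ∑ k, A i β * (A j γ * A k α * eps i j k))
            = ∑ i, ∑ k, ∑ j, A i β * (A j γ * A k α * eps i j k) :=
              Finset.sum_congr rfl fun i _ => Finset.sum_comm
        _ = ∑ k, ∑ i, ∑ j, A i β * (A j γ * A k α * eps i j k) := Finset.sum_comm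
        _ = ∑ k, ∑ j, ∑ i, A i β * (A j γ * A k α * eps i j k) :=
              Finset.sum_congr rfl fun k _ => Finset.sum_comm
      have neg : (∑ k, ∑ j, ∑ i, A i β * (A j γ * A k α * eps i j k))
          = - ∑ i, ∑ j, ∑ k, A i α * (A j γ * A k β * eps i j k) := by
        rw [← Finset.sum_neg_distrib]
        refine Finset.sum_congr rfl fun x _ => ?_
        rw [← Finset.sum_neg_distrib]
        refine Finset.sum_congr rfl fun y _ => ?_
        rw [← Finset.sum_neg_distrib]
        refine Finset.sum_congr rfl fun z _ => ?_
        rw [eps_swap13 x y z]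
        ring
      rw [swap, neg]
      ring
    have pt : ∀ γ : Fin n, (∑ μ, gt γ μ * Γ μ α β) =
        (1/2) * (Dgt α β γ + Dgt β α γ - Dgt γ α β)
        - (1/h0) * ∑ i, (A i α * (∑ μ, gt γ μ * F μ β i)
            + A i β * (∑ μ, gt γ μ * F μ α i)) := by
      intro γ
      have gk := GK α β γ
      have d1 := hDgt' α β γ
      have d2 := hDgt' β α γ
      have d3 := hDgt' γ α β
      have fs := fsplit γ
      have ep := epsP γ
      linear_combination (1/2)*gk - (1/2)*d1 - (1/2)*d2 + (1/2)*d3 + (1/h0)*fs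
        - (1/(2*h0^2))*ep
    have k0 := key (fun μ => Γ μ α β) σ
    have kF : ∀ (b : Fin n) (i : Fin 3), F σ b i = ∑ γ, gtinv σ γ * ∑ μ, gt γ μ * F μ b i :=
      fun b i => by have := key (fun μ => F μ b i) σ; simpa using this
    rw [k0, hΓt]
    calc ∑ γ, gtinv σ γ * ∑ μ, gt γ μ * Γ μ α β
        = ∑ γ, ((1/2) * (gtinv σ γ * (Dgt α β γ + Dgt β α γ - Dgt γ α β))
            - (1/h0) * ∑ i, (A i α * (gtinv σ γ * ∑ μ, gt γ μ * F μ β i)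
                + A i β * (gtinv σ γ * ∑ μ, gt γ μ * F μ α i))) := by
          refine Finset.sum_congr rfl fun γ _ => ?_
          have hu : (∑ i, (A i α * (gtinv σ γ * ∑ μ, gt γ μ * F μ β i)
              + A i β * (gtinv σ γ * ∑ μ, gt γ μ * F μ α i)))
              = gtinv σ γ * ∑ i, (A i α * (∑ μ, gt γ μ * F μ β i)
                + A i β * (∑ μ, gt γ μ * F μ α i)) := by
            rw [Finset.mul_sum]
            exact Finset.sum_congr rfl fun i _ => by ring
          rw [hu, pt γ]
          ring
    _ = (1/2) * (∑ γ, gtinv σ γ * (Dgt α β γ + Dgt β α γ - Dgt γ α β))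
        - (1/h0) * ∑ γ, ∑ i, (A i α * (gtinv σ γ * ∑ μ, gt γ μ * F μ β i)
            + A i β * (gtinv σ γ * ∑ μ, gt γ μ * F μ α i)) := by
          rw [Finset.sum_sub_distrib, ← Finset.mul_sum, ← Finset.mul_sum]
    _ = 1/2 * ∑ ρ, gtinv σ ρ * (Dgt α β ρ + Dgt β α ρ - Dgt ρ α β)
        - 1/h0 * ∑ i, (A i α * F σ β i + A i β * F σ α i) := by
          have hswap : (∑ γ, ∑ i, (A i α * (gtinv σ γ * ∑ μ, gt γ μ * F μ β i)
              + A i β * (gtinv σ γ * ∑ μ, gt γ μ * F μ α i)))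
              = ∑ i, (A i α * F σ β i + A i β * F σ α i) := by
            rw [Finset.sum_comm]
            refine Finset.sum_congr rfl fun i _ => ?_
            rw [kF β i, kF α i, Finset.mul_sum, Finset.mul_sum, ← Finset.sum_add_distrib]
          rw [hswap]
  exact ⟨hF, lastΓ, hD0, hE, hB, hH⟩
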